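/- arXiv:1402.3917 — 4 statements merged into one kernel-verified Lean document; each statement's English description precedes it below -/
import Mathlib

section
/- Let G be a locally compact second countable group, π a strongly continuous unitary representation of G on a separable Hilbert space H, and u ∈ H an admissible vector, i.e. the voice transform V₂v(x) = ⟨v, π(x)u⟩ is an isometry from H into L²(G). Then for every v ∈ H, the convolution V₂v ⋆ K exists and equals V₂v, where K = V₂u; in particular K ⋆ K = K. -/
open MeasureTheory
open scoped ComplexInnerProductSpace

/-- Reproducing formula: if `π` is a strongly continuous unitary representation of a locally
compact second countable group `G` on a separable Hilbert space `H` and `u` is an admissible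
vector (the voice transform `V₂v(x) = ⟨v, π(x)u⟩` is an isometry into `L²(G)`), then for every
`v ∈ H` the convolution `V₂v ⋆ K` exists and equals `V₂v`, where `K = V₂u`; in particular
`K ⋆ K = K`. -/
theorem voice_transform_reproducing
    {G : Type*} [Group G] [TopologicalSpace G] [IsTopologicalGroup G]
    [LocallyCompactSpace G] [SecondCountableTopology G]
    [MeasurableSpace G] [BorelSpace G]
    (μ : Measure G) [μ.IsHaarMeasure]
    {H : Type*} [NormedAddCommGroup H] [InnerProductSpace ℂ H] [CompleteSpace H]
    [SecondCountableTopology H]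
    (π : G →* (H ≃ₗᵢ[ℂ] H))
    (hπ_cont : ∀ v : H, Continuous fun x => π x v)
    (u : H)
    (hadm : ∀ v : H, MemLp (fun x => ⟪π x u, v⟫) 2 μ ∧
      eLpNorm (fun x => ⟪π x u, v⟫) 2 μ = ENNReal.ofReal ‖v‖) :
    (∀ (v : H) (x : G),
      Integrable (fun y => ⟪π y u, v⟫ * ⟪π (y⁻¹ * x) u, u⟫) μ ∧
      ∫ y, ⟪π y u, v⟫ * ⟪π (y⁻¹ * x) u, u⟫ ∂μ = ⟪π x u, v⟫) ∧
    (∀ x : G, ∫ y, ⟪π y u, u⟫ * ⟪π (y⁻¹ * x) u, u⟫ ∂μ = ⟪π x u, u⟫) := by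
  classical
  have hmem : ∀ v : H, MemLp (fun x => ⟪π x u, v⟫) 2 μ := fun v => (hadm v).1
  -- the voice transform as a linear isometry into L²
  let V : H →ₗᵢ[ℂ] Lp ℂ 2 μ :=
    { toFun := fun v => (hmem v).toLp _
      map_add' := by
        intro v w
        refine Lp.ext ?_
        filter_upwards [MemLp.coeFn_toLp (hmem (v + w)),
          Lp.coeFn_add ((hmem v).toLp _) ((hmem w).toLp _),
          MemLp.coeFn_toLp (hmem v), MemLp.coeFn_toLp (hmem w)] with y h1 h2 h3 h4
        rw [h1, h2, Pi.add_apply, h3, h4, inner_add_right]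
      map_smul' := by
        intro c v
        refine Lp.ext ?_
        simp only [RingHom.id_apply]
        filter_upwards [MemLp.coeFn_toLp (hmem (c • v)),
          Lp.coeFn_smul c ((hmem v).toLp _), MemLp.coeFn_toLp (hmem v)] with y h1 h2 h3
        rw [h1, h2, Pi.smul_apply, h3, inner_smul_right]
        simp
      norm_map' := by
        intro v
        show ‖(hmem v).toLp _‖ = ‖v‖
        rw [Lp.norm_toLp _ (hmem v), (hadm v).2, ENNReal.toReal_ofReal (norm_nonneg v)] }
  -- key pointwise identity
  have hkey : ∀ x y : G, ⟪π (y⁻¹ * x) u, u⟫ = ⟪π x u, π y u⟫ := by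
    intro x y
    calc ⟪π (y⁻¹ * x) u, u⟫ = ⟪π y (π (y⁻¹ * x) u), π y u⟫ :=
          ((π y).inner_map_map _ _).symm
      _ = ⟪π x u, π y u⟫ := by
          congr 1
          have : π y (π (y⁻¹ * x) u) = (π y * π (y⁻¹ * x)) u := rfl
          rw [this, ← map_mul, mul_inv_cancel_left]
  have main : ∀ (v : H) (x : G),
      Integrable (fun y => ⟪π y u, v⟫ * ⟪π (y⁻¹ * x) u, u⟫) μ ∧
      ∫ y, ⟪π y u, v⟫ * ⟪π (y⁻¹ * x) u, u⟫ ∂μ = ⟪π x u, v⟫ := by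
    intro v x
    set F : Lp ℂ 2 μ := V v with hFdef
    set Gx : Lp ℂ 2 μ := V (π x u) with hGdef
    have hF : ⇑F =ᵐ[μ] fun y => ⟪π y u, v⟫ := MemLp.coeFn_toLp (hmem v)
    have hG : ⇑Gx =ᵐ[μ] fun y => ⟪π y u, π x u⟫ := MemLp.coeFn_toLp (hmem (π x u))
    have hcongr : (fun y => ⟪Gx y, F y⟫) =ᵐ[μ]
        fun y => ⟪π y u, v⟫ * ⟪π (y⁻¹ * x) u, u⟫ := by
      filter_upwards [hF, hG] with y h1 h2
      rw [RCLike.inner_apply, h1, h2, hkey x y, ← inner_conj_symm (π y u) (π x u),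
        starRingEnd_self_apply]
    have hint : Integrable (fun y => ⟪Gx y, F y⟫) μ := L2.integrable_inner Gx F
    refine ⟨hint.congr hcongr, ?_⟩
    calc ∫ y, ⟪π y u, v⟫ * ⟪π (y⁻¹ * x) u, u⟫ ∂μ
        = ∫ y, ⟪Gx y, F y⟫ ∂μ := (integral_congr_ae hcongr).symm
      _ = ⟪Gx, F⟫ := (L2.inner_def Gx F).symm
      _ = ⟪π x u, v⟫ := V.inner_map_map _ _
  exact ⟨main, fun x => (main u x).2⟩
end

section
/- Let π be a strongly continuous unitary representation of a locally compact second countable group G on a separable Hilbert space H with admissible vector u. Then the image V₂(H) of the voice transform equals the reproducing kernel space M² = {f ∈ L²(G) : f ⋆ K = f}, where K = V₂u; moreover π(f)u = f's inverse under V₂, i.e. V₂(π(f)u) = f for all f ∈ M² and π(V₂v)u = v for all v ∈ H, so V₂ is a unitary map from H onto M². -/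
open MeasureTheory
open scoped ComplexInnerProductSpace

/-- The convolution `f ⋆ g (x) = ∫ f y * g (y⁻¹ x) dy` on a locally compact group. -/
noncomputable def groupConv {G : Type*} [Group G] [MeasurableSpace G]
    (μ : MeasureTheory.Measure G) (f g : G → ℂ) : G → ℂ :=
  fun x => ∫ y, f y * g (y⁻¹ * x) ∂μ

/-- Let `π` be a strongly continuous unitary representation of a locally compact second
countable group `G` on a separable Hilbert space `H` with admissible vector `u`, voice
transform `V₂v = ⟨v, π(·)u⟩` and kernel `K = V₂u`. Then the image of `V₂` is the reproducing
kernel space `M² = {f ∈ L²(G) : f ⋆ K = f}`; moreover `V₂(π(f)u) = f` for `f ∈ M²` and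
`π(V₂v)u = v` for `v ∈ H`, where `π(f)u` is defined weakly by
`⟨π(f)u, w⟩ = ∫ f(x) ⟨π(x)u, w⟩ dx`. Hence `V₂` is a unitary map from `H` onto `M²`. -/
theorem voice_transform_range_eq_reproducing_kernel_space
    {G : Type*} [Group G] [TopologicalSpace G] [IsTopologicalGroup G]
    [LocallyCompactSpace G] [SecondCountableTopology G]
    [MeasurableSpace G] [BorelSpace G]
    (μ : Measure G) [μ.IsHaarMeasure]
    {H : Type*} [NormedAddCommGroup H] [InnerProductSpace ℂ H] [CompleteSpace H]
    [SecondCountableTopology H]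
    (π : G →* (H ≃ₗᵢ[ℂ] H))
    (hπ_cont : ∀ v : H, Continuous fun x => π x v)
    (u : H)
    (hadm : ∀ v : H, MemLp (fun x => ⟪π x u, v⟫) 2 μ ∧
      eLpNorm (fun x => ⟪π x u, v⟫) 2 μ = ENNReal.ofReal ‖v‖) :
    -- `V₂(H) ⊆ M²` : every voice transform is reproduced by convolution with `K`
    (∀ v : H, groupConv μ (fun x => ⟪π x u, v⟫) (fun x => ⟪π x u, u⟫)
        =ᵐ[μ] fun x => ⟪π x u, v⟫) ∧
    -- `M² ⊆ V₂(H)` : every `f ∈ M²` is the voice transform of `π(f)u`, and `V₂ π(f)u = f`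
    (∀ f : G → ℂ, MemLp f 2 μ →
      groupConv μ f (fun x => ⟪π x u, u⟫) =ᵐ[μ] f →
      ∃ v : H, (∀ w : H, ⟪w, v⟫ = ∫ x, f x * ⟪w, π x u⟫ ∂μ) ∧
        (fun x => ⟪π x u, v⟫) =ᵐ[μ] f) ∧
    -- `π(V₂v)u = v` for every `v ∈ H`
    (∀ v w : H, ⟪w, v⟫ = ∫ x, ⟪π x u, v⟫ * ⟪w, π x u⟫ ∂μ) := by

  classical
  have hvmem : ∀ v : H, MemLp (fun x => ⟪π x u, v⟫) 2 μ := fun v => (hadm v).1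
  -- The voice transform as a linear isometry into L².
  let V : H →ₗᵢ[ℂ] (Lp ℂ 2 μ) :=
    { toFun := fun v => (hvmem v).toLp _
      map_add' := by
        intro v w
        refine Lp.ext ?_
        filter_upwards [MemLp.coeFn_toLp (hvmem (v + w)),
          Lp.coeFn_add ((hvmem v).toLp _) ((hvmem w).toLp _),
          MemLp.coeFn_toLp (hvmem v), MemLp.coeFn_toLp (hvmem w)] with x h1 h2 h3 h4
        rw [h1, h2, Pi.add_apply, h3, h4, inner_add_right]
      map_smul' := by
        intro c v
        simp only [RingHom.id_apply]
        refine Lp.ext ?_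
        filter_upwards [MemLp.coeFn_toLp (hvmem (c • v)),
          Lp.coeFn_smul c ((hvmem v).toLp _),
          MemLp.coeFn_toLp (hvmem v)] with x h1 h2 h3
        rw [h1, h2, Pi.smul_apply, h3, inner_smul_right, smul_eq_mul]
      norm_map' := by
        intro v
        show ‖(hvmem v).toLp _‖ = ‖v‖
        rw [Lp.norm_toLp, (hadm v).2, ENNReal.toReal_ofReal (norm_nonneg v)] }
  have hVcoe : ∀ v : H, (V v : G → ℂ) =ᵐ[μ] fun x => ⟪π x u, v⟫ :=
    fun v => MemLp.coeFn_toLp (hvmem v)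
  -- key isometry identity via polarization
  have key : ∀ v w : H,
      ⟪v, w⟫ = ∫ x, (starRingEnd ℂ) ⟪π x u, v⟫ * ⟪π x u, w⟫ ∂μ := by
    intro v w
    have h1 : ⟪v, w⟫ = ⟪V v, V w⟫ := (V.inner_map_map v w).symm
    rw [h1, MeasureTheory.L2.inner_def]
    refine integral_congr_ae ?_
    filter_upwards [hVcoe v, hVcoe w] with x h1 h2
    simp [h1, h2, RCLike.inner_apply, mul_comm]
  -- claim 3
  have c3 : ∀ v w : H, ⟪w, v⟫ = ∫ x, ⟪π x u, v⟫ * ⟪w, π x u⟫ ∂μ := by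
    intro v w
    calc ⟪w, v⟫ = (starRingEnd ℂ) ⟪v, w⟫ := by rw [inner_conj_symm]
      _ = (starRingEnd ℂ) (∫ x, (starRingEnd ℂ) ⟪π x u, v⟫ * ⟪π x u, w⟫ ∂μ) := by
            rw [← key v w]
      _ = ∫ x, (starRingEnd ℂ) ((starRingEnd ℂ) ⟪π x u, v⟫ * ⟪π x u, w⟫) ∂μ := by
            rw [integral_conj]
      _ = ∫ x, ⟪π x u, v⟫ * ⟪w, π x u⟫ ∂μ := by
            refine integral_congr_ae (Filter.Eventually.of_forall fun x => ?_)
            simp [map_mul, inner_conj_symm]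
  -- kernel identity
  have hker : ∀ x y : G, ⟪π (y⁻¹ * x) u, u⟫ = ⟪π x u, π y u⟫ := by
    intro x y
    have h := (π y).inner_map_map (π (y⁻¹ * x) u) u
    rw [← h]
    congr 1
    have hmul : π y * π (y⁻¹ * x) = π x := by
      rw [← map_mul, mul_inv_cancel_left]
    calc (π y) ((π (y⁻¹ * x)) u) = (π y * π (y⁻¹ * x)) u := rfl
      _ = (π x) u := by rw [hmul]
  refine ⟨?_, ?_, c3⟩
  · -- claim 1
    intro v
    refine Filter.Eventually.of_forall fun x => ?_
    show (∫ y, ⟪π y u, v⟫ * ⟪π (y⁻¹ * x) u, u⟫ ∂μ) = ⟪π x u, v⟫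
    calc (∫ y, ⟪π y u, v⟫ * ⟪π (y⁻¹ * x) u, u⟫ ∂μ)
        = ∫ y, ⟪π y u, v⟫ * ⟪π x u, π y u⟫ ∂μ := by
          refine integral_congr_ae (Filter.Eventually.of_forall fun y => ?_)
          simp only [hker]
      _ = ⟪π x u, v⟫ := (c3 v (π x u)).symm
  · -- claim 2
    intro f hf hconv
    set F : Lp ℂ 2 μ := hf.toLp f with hF
    have hFcoe : (F : G → ℂ) =ᵐ[μ] f := MemLp.coeFn_toLp hf
    let φ : H →L[ℂ] ℂ := (innerSL ℂ F).comp V.toContinuousLinearMap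
    set v : H := (InnerProductSpace.toDual ℂ H).symm φ with hv
    have hvw : ∀ w : H, ⟪v, w⟫ = ⟪F, V w⟫ := fun w =>
      InnerProductSpace.toDual_symm_apply
    have hint : ∀ w : H, ⟪v, w⟫ = ∫ x, (starRingEnd ℂ) (f x) * ⟪π x u, w⟫ ∂μ := by
      intro w
      rw [hvw w, MeasureTheory.L2.inner_def]
      refine integral_congr_ae ?_
      filter_upwards [hFcoe, hVcoe w] with x h1 h2
      simp [h1, h2, RCLike.inner_apply, mul_comm]
    refine ⟨v, ?_, ?_⟩
    · intro w
      calc ⟪w, v⟫ = (starRingEnd ℂ) ⟪v, w⟫ := by rw [inner_conj_symm]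
        _ = (starRingEnd ℂ) (∫ x, (starRingEnd ℂ) (f x) * ⟪π x u, w⟫ ∂μ) := by
              rw [← hint w]
        _ = ∫ x, (starRingEnd ℂ) ((starRingEnd ℂ) (f x) * ⟪π x u, w⟫) ∂μ := by
              rw [integral_conj]
        _ = ∫ x, f x * ⟪w, π x u⟫ ∂μ := by
              refine integral_congr_ae (Filter.Eventually.of_forall fun x => ?_)
              simp [map_mul, inner_conj_symm]
    · have hgc : ∀ x : G, ⟪π x u, v⟫ = groupConv μ f (fun y => ⟪π y u, u⟫) x := by
        intro x
        calc ⟪π x u, v⟫ = (starRingEnd ℂ) ⟪v, π x u⟫ := by rw [inner_conj_symm]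
          _ = (starRingEnd ℂ) (∫ y, (starRingEnd ℂ) (f y) * ⟪π y u, π x u⟫ ∂μ) := by
                rw [← hint (π x u)]
          _ = ∫ y, (starRingEnd ℂ) ((starRingEnd ℂ) (f y) * ⟪π y u, π x u⟫) ∂μ := by
                rw [integral_conj]
          _ = ∫ y, f y * ⟪π (y⁻¹ * x) u, u⟫ ∂μ := by
                refine integral_congr_ae (Filter.Eventually.of_forall fun y => ?_)
                show (starRingEnd ℂ) ((starRingEnd ℂ) (f y) * ⟪π y u, π x u⟫)
                  = f y * ⟪π (y⁻¹ * x) u, u⟫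
                rw [hker x y, map_mul, Complex.conj_conj, inner_conj_symm]
          _ = groupConv μ f (fun y => ⟪π y u, u⟫) x := rfl
      have : (fun x => ⟪π x u, v⟫) = groupConv μ f (fun y => ⟪π y u, u⟫) :=
        funext hgc
      rw [this]
      exact hconv
end

section
/- For G = ℝ with Lebesgue measure and Ω ⊂ ℝ compact, a vector u in the Paley–Wiener space B²_Ω = {v ∈ L²(ℝ) : supp(v̂) ⊆ Ω} is admissible for the translation representation π(b)v(x) = v(x−b) (i.e. v ↦ (b ↦ ⟨v, π(b)u⟩) is an isometry B²_Ω → L²(ℝ)) if and only if |û(ξ)| = 1 for almost every ξ ∈ Ω. -/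
open MeasureTheory Complex

open Set

lemma norm_exp_2pi (b ξ : ℝ) : ‖Complex.exp (2 * Real.pi * Complex.I * b * ξ)‖ = 1 := by
  rw [Complex.norm_exp]
  norm_num [Complex.mul_re, Complex.mul_im]

lemma eLpNorm_two_eq {α : Type*} [MeasurableSpace α] (μ : Measure α) (f : α → ℂ) :
    eLpNorm f 2 μ = (∫⁻ x, (‖f x‖₊ : ENNReal) ^ 2 ∂μ) ^ (1/2 : ℝ) := by
  rw [eLpNorm_eq_lintegral_rpow_enorm_toReal (by norm_num) (by norm_num)]
  norm_num [enorm_eq_nnnorm]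

lemma ennreal_sq_inj {x y : ENNReal} (h : x ^ (1/2:ℝ) = y ^ (1/2:ℝ)) : x = y := by
  have := congrArg (fun z : ENNReal => z ^ (2:ℝ)) h
  simp only [← ENNReal.rpow_mul] at this
  norm_num at this
  exact this

lemma lintegral_sq_eq_of_eLpNorm_eq {α : Type*} [MeasurableSpace α] {μ : Measure α}
    {f g : α → ℂ} (h : eLpNorm f 2 μ = eLpNorm g 2 μ) :
    ∫⁻ x, (‖f x‖₊ : ENNReal) ^ 2 ∂μ = ∫⁻ x, (‖g x‖₊ : ENNReal) ^ 2 ∂μ := by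
  rw [eLpNorm_two_eq, eLpNorm_two_eq] at h
  exact ennreal_sq_inj h

lemma plancherel_Ioc (a T : ℝ) (hT : 0 < T) (W : ℝ → ℂ) (hWm : StronglyMeasurable W)
    (hW : MemLp W 2 volume)
    (hsupp : ∀ ξ, ξ ∉ Set.Ioc a (a + T) → W ξ = 0) :
    eLpNorm (fun b : ℝ => ∫ ξ : ℝ, W ξ * Complex.exp (2 * Real.pi * Complex.I * b * ξ)) 2 volume
      = eLpNorm W 2 volume := by
  haveI : Fact (0 < T) := ⟨hT⟩
  set N : ℝ := ∫ ξ : ℝ, ‖W ξ‖ ^ 2 with hN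
  have hNnonneg : 0 ≤ N := integral_nonneg fun ξ => sq_nonneg _
  -- integrability of W
  have hWindicator : (Set.Ioc a (a+T)).indicator W = W := by
    funext x
    by_cases hx : x ∈ Set.Ioc a (a+T)
    · simp [Set.indicator_of_mem hx]
    · simp [Set.indicator_of_notMem hx, hsupp x hx]
  have hWi : Integrable W volume := by
    haveI : IsFiniteMeasure (volume.restrict (Set.Ioc a (a+T))) :=
      ⟨by rw [Measure.restrict_apply_univ]; exact measure_Ioc_lt_top⟩
    have h1 : IntegrableOn W (Set.Ioc a (a+T)) volume :=
      memLp_one_iff_integrable.mp ((hW.restrict _).mono_exponent (by norm_num))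
    rw [← hWindicator]
    exact (integrable_indicator_iff measurableSet_Ioc).mpr h1
  have hWsqi : Integrable (fun ξ => ‖W ξ‖ ^ 2) volume := by
    have := hW.integrable_norm_rpow (by norm_num) (by norm_num)
    simpa [ENNReal.toReal_ofNat, Real.rpow_natCast] using this
  set g : ℝ → ℂ := fun b => ∫ ξ : ℝ, W ξ * Complex.exp (2 * Real.pi * Complex.I * b * ξ) with hg
  have hgc : Continuous g := by
    apply continuous_of_dominated (bound := fun ξ => ‖W ξ‖)
    · intro b
      exact (hWm.aestronglyMeasurable.mul
        ((Complex.continuous_exp.comp (by fun_prop)).aestronglyMeasurable))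
    · intro b
      filter_upwards with ξ
      rw [norm_mul, norm_exp_2pi, mul_one]
    · exact hWi.norm
    · filter_upwards with ξ
      exact Continuous.mul continuous_const
        (Complex.continuous_exp.comp (by fun_prop))
  -- Parseval at every shift θ
  have key : ∀ θ : ℝ, Summable (fun n : ℤ => ‖g (θ - n / T)‖ ^ 2) ∧
      ∑' n : ℤ, ‖g (θ - n / T)‖ ^ 2 = T * N := by
    intro θ
    set fθ : ℝ → ℂ := fun ξ => W ξ * Complex.exp (2 * Real.pi * Complex.I * θ * ξ) with hfθ
    have hfθm : StronglyMeasurable fθ :=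
      hWm.mul (Complex.continuous_exp.comp (by fun_prop)).stronglyMeasurable
    have hfθnorm : ∀ ξ, ‖fθ ξ‖ = ‖W ξ‖ := fun ξ => by
      rw [hfθ]; simp only []; rw [norm_mul, norm_exp_2pi, mul_one]
    set L : AddCircle T → ℂ := AddCircle.liftIoc T a fθ with hLdef
    have hLm : StronglyMeasurable L := by
      have hrepr : L = fun x => fθ ((AddCircle.measurableEquivIoc T a x : Set.Ioc a (a+T)) : ℝ) := rfl
      rw [hrepr]
      exact hfθm.comp_measurable
        (measurable_subtype_coe.comp (AddCircle.measurableEquivIoc T a).measurable)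
    have hIocL : ∀ x : ℝ, x ∈ Set.Ioc a (a + T) → L ↑x = fθ x := fun x hx =>
      AddCircle.liftIoc_coe_apply hx
    -- L² membership of L w.r.t. haar measure
    have hWlt : ∫⁻ ξ : ℝ, (‖W ξ‖₊ : ENNReal) ^ 2 ∂volume < ⊤ := by
      have h2 := hW.2
      rw [eLpNorm_two_eq] at h2
      exact (ENNReal.rpow_lt_top_iff_of_pos (by norm_num)).mp h2
    have hLlint : ∫⁻ t : AddCircle T, (‖L t‖₊ : ENNReal) ^ 2 ∂(volume) =
        ∫⁻ ξ : ℝ, (‖W ξ‖₊ : ENNReal) ^ 2 ∂volume := by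
      rw [← AddCircle.lintegral_preimage T a (fun t => (‖L t‖₊ : ENNReal) ^ 2)]
      have hcong : ∀ x ∈ Set.Ioc a (a+T), (‖L (x:ℝ)‖₊ : ENNReal) ^ 2 = (‖W x‖₊ : ENNReal) ^ 2 := by
        intro x hx
        rw [hIocL x hx]
        congr 2
        exact NNReal.coe_injective (by simpa using hfθnorm x)
      rw [setLIntegral_congr_fun measurableSet_Ioc hcong]
      rw [← lintegral_indicator measurableSet_Ioc]
      congr 1
      funext x
      by_cases hx : x ∈ Set.Ioc a (a+T)
      · simp [Set.indicator_of_mem hx]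
      · simp [Set.indicator_of_notMem hx, hsupp x hx]
    have memL2 : MemLp L 2 (AddCircle.haarAddCircle) := by
      refine ⟨hLm.aestronglyMeasurable, ?_⟩
      rw [eLpNorm_two_eq]
      refine ENNReal.rpow_lt_top_of_nonneg (by norm_num) ?_
      have hsm : (volume : Measure (AddCircle T)) = ENNReal.ofReal T • AddCircle.haarAddCircle :=
        AddCircle.volume_eq_smul_haarAddCircle
      have : ∫⁻ t : AddCircle T, (‖L t‖₊ : ENNReal) ^ 2 ∂(volume) =
          ENNReal.ofReal T * ∫⁻ t : AddCircle T, (‖L t‖₊ : ENNReal) ^ 2 ∂AddCircle.haarAddCircle := by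
        rw [hsm, lintegral_smul_measure, smul_eq_mul]
      rw [hLlint] at this
      intro htop
      rw [htop, ENNReal.mul_top (by simp [hT])] at this
      exact (lt_irrefl ⊤ (this ▸ hWlt)).elim
    set F : Lp ℂ 2 (AddCircle.haarAddCircle (T := T)) := memL2.toLp L with hF
    have coeffF : ∀ n : ℤ, fourierCoeff (F : AddCircle T → ℂ) n = fourierCoeff L n := by
      intro n
      unfold fourierCoeff
      refine integral_congr_ae ?_
      filter_upwards [memL2.coeFn_toLp] with x hx
      rw [hF, hx]
    have coeff : ∀ n : ℤ, fourierCoeff L n = (1/T : ℝ) • g (θ - (n : ℝ) / T) := by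
      intro n
      have hab : a < a + T := by linarith
      have hTT : a + T - a = T := by ring
      rw [hLdef, fourierCoeff_liftIoc_eq, fourierCoeffOn_eq_integral]
      have hintg : ∀ x : ℝ, (@fourier T (-n) (x : AddCircle T)) • fθ x
          = W x * Complex.exp (2 * Real.pi * Complex.I * ((θ - (n:ℝ) / T : ℝ) : ℂ) * x) := by
        intro x
        rw [fourier_coe_apply, smul_eq_mul, hfθ]
        have hT0 : (T : ℂ) ≠ 0 := by exact_mod_cast hT.ne'
        calc Complex.exp (2 * Real.pi * Complex.I * (-n : ℤ) * x / T) *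
              (W x * Complex.exp (2 * Real.pi * Complex.I * θ * x))
            = W x * (Complex.exp (2 * Real.pi * Complex.I * (-n : ℤ) * x / T) *
              Complex.exp (2 * Real.pi * Complex.I * θ * x)) := by ring
          _ = W x * Complex.exp (2 * Real.pi * Complex.I * (-n : ℤ) * x / T +
              2 * Real.pi * Complex.I * θ * x) := by rw [Complex.exp_add]
          _ = W x * Complex.exp (2 * Real.pi * Complex.I * ((θ - (n:ℝ) / T : ℝ) : ℂ) * x) := by
              congr 1
              push_cast
              field_simp
              ring
      calc (1 / (a + T - a)) • ∫ x in a..a+T, (fourier (-n) (x : AddCircle (a+T-a))) • fθ x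
          = (1/T : ℝ) • ∫ x in a..a+T,
              W x * Complex.exp (2 * Real.pi * Complex.I * ((θ - (n:ℝ) / T : ℝ) : ℂ) * x) := by
            rw [hTT]; congr 1; exact intervalIntegral.integral_congr fun x _ => hintg x
        _ = (1/T : ℝ) • g (θ - (n:ℝ)/T) := by
            congr 1
            rw [intervalIntegral.integral_of_le hab.le, hg]
            exact setIntegral_eq_integral_of_forall_compl_eq_zero fun x hx => by
              rw [hsupp x hx, zero_mul]
    have hcoeffnorm : ∀ n : ℤ, ‖fourierCoeff (F : AddCircle T → ℂ) n‖ ^ 2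
        = (1/T)^2 * ‖g (θ - (n : ℝ) / T)‖ ^ 2 := by
      intro n
      rw [coeffF, coeff n, norm_smul, mul_pow]
      congr 2
      rw [Real.norm_eq_abs, abs_of_pos (by positivity)]
    -- Parseval
    have hsummF : Summable (fun i : ℤ => ‖fourierCoeff (F : AddCircle T → ℂ) i‖ ^ 2) := by
      have h1 := (lp.memℓp (fourierBasis.repr F)).summable (by norm_num)
      refine h1.congr fun i => ?_
      rw [fourierBasis_repr]
      norm_num [Real.rpow_natCast]
    have hsummg : Summable (fun n : ℤ => ‖g (θ - (n : ℝ) / T)‖ ^ 2) := by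
      have := hsummF.mul_left (T^2)
      refine this.congr fun n => ?_
      rw [hcoeffnorm n]
      field_simp
    have hParseval := tsum_sq_fourierCoeff F
    have hRHS : ∫ t : AddCircle T, ‖(F : AddCircle T → ℂ) t‖ ^ 2 ∂AddCircle.haarAddCircle
        = (1/T) * N := by
      have e1 : ∫ t : AddCircle T, ‖(F : AddCircle T → ℂ) t‖ ^ 2 ∂AddCircle.haarAddCircle
          = ∫ t : AddCircle T, ‖L t‖ ^ 2 ∂AddCircle.haarAddCircle := by
        refine integral_congr_ae ?_
        filter_upwards [memL2.coeFn_toLp] with x hx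
        rw [hF, hx]
      have e2 : ∫ t : AddCircle T, ‖L t‖ ^ 2 ∂(volume)
          = T * ∫ t : AddCircle T, ‖L t‖ ^ 2 ∂AddCircle.haarAddCircle := by
        rw [AddCircle.volume_eq_smul_haarAddCircle, integral_smul_measure,
          ENNReal.toReal_ofReal hT.le, smul_eq_mul]
      have e3 : ∫ t : AddCircle T, ‖L t‖ ^ 2 ∂(volume) = N := by
        rw [← AddCircle.integral_preimage T a (fun t => ‖L t‖^2)]
        rw [setIntegral_congr_fun measurableSet_Ioc (fun x hx => by
          rw [hIocL x hx, hfθnorm x])]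
        exact setIntegral_eq_integral_of_forall_compl_eq_zero fun x hx => by
          rw [hsupp x hx]; simp
      rw [e1]
      have := e3 ▸ e2
      field_simp at this ⊢
      linarith
    refine ⟨hsummg, ?_⟩
    rw [hRHS] at hParseval
    have e4 : ∑' i : ℤ, ‖fourierCoeff (F : AddCircle T → ℂ) i‖ ^ 2
        = (1/T)^2 * ∑' n : ℤ, ‖g (θ - (n : ℝ) / T)‖ ^ 2 := by
      rw [← tsum_mul_left]
      exact tsum_congr fun n => hcoeffnorm n
    rw [e4] at hParseval
    obtain ⟨S, hSdef⟩ : ∃ S : ℝ, ∑' n : ℤ, ‖g (θ - (n : ℝ) / T)‖ ^ 2 = S := ⟨_, rfl⟩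
    rw [hSdef] at hParseval ⊢
    have hT' : T ≠ 0 := hT.ne'
    field_simp at hParseval
    have h6 : S * T = (T * N) * T := by linear_combination T * hParseval
    exact mul_right_cancel₀ hT' h6
  -- global computation
  have hterm : ∀ (h : ℝ → ℂ) (x : ℝ), ENNReal.ofReal (‖h x‖ ^ 2) = (‖h x‖₊ : ENNReal) ^ 2 := by
    intro h x
    rw [ENNReal.ofReal_pow (norm_nonneg _), ofReal_norm, enorm_eq_nnnorm]
  have hWlint : ∫⁻ ξ : ℝ, (‖W ξ‖₊ : ENNReal) ^ 2 = ENNReal.ofReal N := by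
    rw [lintegral_congr fun ξ => (hterm W ξ).symm]
    exact (ofReal_integral_eq_lintegral_ofReal hWsqi
      (Filter.Eventually.of_forall fun ξ => sq_nonneg _)).symm
  set τ : ℝ := T⁻¹ with hτdef
  have hτ : 0 < τ := by positivity
  set S : ℤ → Set ℝ := fun n => Set.Ioc ((n:ℝ)*τ) ((n:ℝ)*τ + τ) with hSdef
  have hSmeas : ∀ n : ℤ, MeasurableSet (S n) := fun n => measurableSet_Ioc
  have hSdisj : Pairwise (Function.onFun Disjoint S) := by
    have hd : ∀ m n : ℤ, m < n → Disjoint (S m) (S n) := by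
      intro m n h
      apply Set.disjoint_left.mpr
      rintro x ⟨_, hx2⟩ ⟨hx3, _⟩
      have hmn : (m:ℝ) + 1 ≤ n := by exact_mod_cast h
      nlinarith
    intro m n hmn
    rcases hmn.lt_or_gt with h | h
    · exact hd m n h
    · exact (hd n m h).symm
  have hSunion : (⋃ n : ℤ, S n) = Set.univ := by
    ext x
    simp only [Set.mem_iUnion, Set.mem_univ, iff_true]
    refine ⟨⌈x/τ⌉ - 1, ?_, ?_⟩
    · push_cast
      have h1 : (⌈x/τ⌉ : ℝ) - 1 < x/τ := by
        have := Int.ceil_lt_add_one (x/τ)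
        linarith
      calc ((⌈x/τ⌉:ℝ) - 1) * τ < (x/τ) * τ := by
            exact mul_lt_mul_of_pos_right h1 hτ
        _ = x := by field_simp
    · push_cast
      have h1 : x/τ ≤ (⌈x/τ⌉ : ℝ) := Int.le_ceil _
      calc x = (x/τ) * τ := by field_simp
        _ ≤ (⌈x/τ⌉:ℝ) * τ := mul_le_mul_of_nonneg_right h1 hτ.le
        _ = ((⌈x/τ⌉:ℝ) - 1) * τ + τ := by ring
  set h : ℝ → ENNReal := fun b => (‖g b‖₊ : ENNReal) ^ 2 with hhdef
  have hhmeas : Measurable h :=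
    (hgc.measurable.nnnorm.coe_nnreal_ennreal).pow_const 2
  have hpoint : ∀ θ' : ℝ, ∑' n : ℤ, h (θ' + (n:ℝ)*τ) = ENNReal.ofReal (T * N) := by
    intro θ'
    have e1 : ∑' n : ℤ, h (θ' + (n:ℝ)*τ) = ∑' n : ℤ, h (θ' - (n:ℝ)/T) := by
      rw [← (Equiv.neg ℤ).tsum_eq (fun n : ℤ => h (θ' + (n:ℝ)*τ))]
      refine tsum_congr fun n => ?_
      have : θ' + ((Equiv.neg ℤ n : ℤ) : ℝ) * τ = θ' - (n:ℝ)/T := by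
        simp only [Equiv.neg_apply, Int.cast_neg, hτdef]
        field_simp
        ring
      rw [this]
    rw [e1]
    obtain ⟨hsum, hval⟩ := key θ'
    have e2 : ∑' n : ℤ, h (θ' - (n:ℝ)/T)
        = ENNReal.ofReal (∑' n : ℤ, ‖g (θ' - (n:ℝ)/T)‖ ^ 2) := by
      rw [ENNReal.ofReal_tsum_of_nonneg (fun n => sq_nonneg _) hsum]
      exact tsum_congr fun n => (hterm g _).symm
    rw [e2, hval]
  have hglint : ∫⁻ b : ℝ, h b = ENNReal.ofReal N := by
    calc ∫⁻ b : ℝ, h b = ∫⁻ b in ⋃ n : ℤ, S n, h b := by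
          rw [hSunion, Measure.restrict_univ]
      _ = ∑' n : ℤ, ∫⁻ b in S n, h b := lintegral_iUnion hSmeas hSdisj h
      _ = ∑' n : ℤ, ∫⁻ θ' in Set.Ioc 0 τ, h (θ' + (n:ℝ)*τ) := by
          refine tsum_congr fun n => ?_
          have := (measurePreserving_add_right volume ((n:ℝ)*τ)).setLIntegral_comp_preimage_emb
            (measurableEmbedding_addRight _) h (S n)
          rw [← this]
          congr 1
          rw [hSdef]
          rw [Set.preimage_add_const_Ioc]
          congr 1 <;> ring
      _ = ∫⁻ θ' in Set.Ioc 0 τ, ∑' n : ℤ, h (θ' + (n:ℝ)*τ) := by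
          exact (lintegral_tsum fun n =>
            ((hhmeas.comp (measurable_add_const _)).aemeasurable)).symm
      _ = ∫⁻ θ' in Set.Ioc 0 τ, ENNReal.ofReal (T * N) := by
          exact setLIntegral_congr_fun measurableSet_Ioc
            (fun θ' _ => hpoint θ')
      _ = ENNReal.ofReal (T * N) * volume (Set.Ioc 0 τ) := setLIntegral_const _ _
      _ = ENNReal.ofReal N := by
          rw [Real.volume_Ioc, ← ENNReal.ofReal_mul (by positivity)]
          congr 1
          rw [hτdef]
          field_simp
          ring
  rw [eLpNorm_two_eq, eLpNorm_two_eq, hWlint]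
  rw [hglint]

lemma plancherel_Ioc' (a T : ℝ) (hT : 0 < T) (W : ℝ → ℂ) (hW : MemLp W 2 volume)
    (hsupp : ∀ ξ, ξ ∉ Set.Ioc a (a + T) → W ξ = 0) :
    eLpNorm (fun b : ℝ => ∫ ξ : ℝ, W ξ * Complex.exp (2 * Real.pi * Complex.I * b * ξ)) 2 volume
      = eLpNorm W 2 volume := by
  set W' : ℝ → ℂ := (Set.Ioc a (a+T)).indicator (hW.1.mk W) with hW'def
  have hW'm : StronglyMeasurable W' :=
    hW.1.stronglyMeasurable_mk.indicator measurableSet_Ioc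
  have hae : W =ᵐ[volume] W' := by
    filter_upwards [hW.1.ae_eq_mk] with x hx
    by_cases h : x ∈ Set.Ioc a (a+T)
    · rw [hW'def]; rw [Set.indicator_of_mem h]; exact hx
    · rw [hW'def]; rw [Set.indicator_of_notMem h]; exact hsupp x h
  have hW' : MemLp W' 2 volume := hW.ae_eq hae
  have hsupp' : ∀ ξ, ξ ∉ Set.Ioc a (a + T) → W' ξ = 0 := fun ξ h =>
    Set.indicator_of_notMem h _
  have e1 : (fun b : ℝ => ∫ ξ : ℝ, W ξ * Complex.exp (2 * Real.pi * Complex.I * b * ξ))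
      = fun b : ℝ => ∫ ξ : ℝ, W' ξ * Complex.exp (2 * Real.pi * Complex.I * b * ξ) := by
    funext b
    refine integral_congr_ae ?_
    filter_upwards [hae] with ξ hξ
    rw [hξ]
  rw [e1, eLpNorm_congr_ae hae]
  exact plancherel_Ioc a T hT W' hW'm hW' hsupp'


/-- For the translation representation `π(b)v(x) = v(x−b)` of `ℝ` on the Paley–Wiener space
`B²_Ω` of `L²` functions with Fourier transform supported in a compact set `Ω`, a vector `u`
is admissible (the voice transform `V v(b) = ⟨v, π(b)u⟩ = F⁻¹(v̂ · conj û)(b)` is an isometry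
into `L²(ℝ)`) if and only if `|û| = 1` almost everywhere on `Ω`.  Here the space `B²_Ω` is
described on the frequency side via Plancherel: vectors are represented by their Fourier
transforms `V, U ∈ L²`, supported in `Ω`, and `‖v‖₂ = ‖v̂‖₂`. -/
theorem paleyWiener_admissible_iff
    (Ω : Set ℝ) (hΩ : IsCompact Ω) (hΩmeas : MeasurableSet Ω)
    (U : ℝ → ℂ) (hU : MemLp U 2 volume) (hUsupp : ∀ ξ, ξ ∉ Ω → U ξ = 0) :
    (∀ V : ℝ → ℂ, MemLp V 2 volume → (∀ ξ, ξ ∉ Ω → V ξ = 0) →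
      eLpNorm (fun b : ℝ =>
          ∫ ξ : ℝ, V ξ * (starRingEnd ℂ) (U ξ) *
            Complex.exp (2 * Real.pi * Complex.I * b * ξ)) 2 volume
        = eLpNorm V 2 volume) ↔
      (∀ᵐ ξ : ℝ ∂volume, ξ ∈ Ω → ‖U ξ‖ = 1) := by

  obtain ⟨r, hr⟩ := hΩ.isBounded.subset_ball 0
  set R : ℝ := max r 1 with hRdef
  have hRpos : (0:ℝ) < R := lt_of_lt_of_le one_pos (le_max_right r 1)
  have hTpos : (0:ℝ) < 2*R := by linarith
  have hΩsub : Ω ⊆ Set.Ioc (-R) (-R + 2*R) := by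
    intro x hx
    have h1 := hr hx
    rw [Metric.mem_ball, Real.dist_eq, sub_zero] at h1
    have h2 : |x| < R := lt_of_lt_of_le h1 (le_max_left r 1)
    rw [abs_lt] at h2
    exact ⟨by linarith [h2.1], by linarith [h2.2]⟩
  constructor
  · -- isometry → |U| = 1 a.e. on Ω
    intro hiso
    have hΩfin : volume Ω < ⊤ := hΩ.measure_lt_top
    have claimC : ∀ s : Set ℝ, MeasurableSet s → s ⊆ Ω →
        ∫⁻ ξ in s, (‖U ξ‖₊ : ENNReal)^2 ∂volume = volume s := by
      intro s hs hsΩ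
      set V : ℝ → ℂ := s.indicator (fun _ => (1:ℂ)) with hVdef
      have hsfin : volume s ≠ ⊤ := (lt_of_le_of_lt (measure_mono hsΩ) hΩfin).ne
      have hV : MemLp V 2 volume := memLp_indicator_const 2 hs 1 (Or.inr hsfin)
      have hVsupp : ∀ ξ, ξ ∉ Ω → V ξ = 0 := fun ξ hξ =>
        Set.indicator_of_notMem (fun hmem => hξ (hsΩ hmem)) _
      have h1 := hiso V hV hVsupp
      have hWm : AEStronglyMeasurable (fun ξ => V ξ * (starRingEnd ℂ) (U ξ)) volume :=
        hV.aestronglyMeasurable.mul (Complex.continuous_conj.comp_aestronglyMeasurable hU.1)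
      have hVle : ∀ ξ, ‖V ξ‖ ≤ 1 := by
        intro ξ
        rw [hVdef]
        by_cases hξ : ξ ∈ s
        · rw [Set.indicator_of_mem hξ]; simp
        · rw [Set.indicator_of_notMem hξ]; simp
      have hWle : ∀ ξ, ‖V ξ * (starRingEnd ℂ) (U ξ)‖ ≤ ‖U ξ‖ := by
        intro ξ
        rw [norm_mul, RCLike.norm_conj]
        calc ‖V ξ‖ * ‖U ξ‖ ≤ 1 * ‖U ξ‖ :=
              mul_le_mul_of_nonneg_right (hVle ξ) (norm_nonneg _)
          _ = ‖U ξ‖ := one_mul _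
      have hWmem : MemLp (fun ξ => V ξ * (starRingEnd ℂ) (U ξ)) 2 volume :=
        hU.of_le hWm (Filter.Eventually.of_forall hWle)
      have hWsupp : ∀ ξ, ξ ∉ Set.Ioc (-R) (-R + 2*R) → V ξ * (starRingEnd ℂ) (U ξ) = 0 := by
        intro ξ hξ
        rw [hVsupp ξ (fun hmem => hξ (hΩsub hmem)), zero_mul]
      have h2 := plancherel_Ioc' (-R) (2*R) hTpos _ hWmem hWsupp
      have h3 : eLpNorm (fun ξ => V ξ * (starRingEnd ℂ) (U ξ)) 2 volume
          = eLpNorm V 2 volume := h2.symm.trans h1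
      have h4 := lintegral_sq_eq_of_eLpNorm_eq h3
      have eW : (fun ξ => (‖V ξ * (starRingEnd ℂ) (U ξ)‖₊ : ENNReal)^2)
          = s.indicator (fun ξ => (‖U ξ‖₊ : ENNReal)^2) := by
        funext ξ
        by_cases hξ : ξ ∈ s
        · rw [Set.indicator_of_mem hξ, hVdef]
          rw [Set.indicator_of_mem hξ, one_mul]
          congr 2
          exact RCLike.nnnorm_conj _
        · rw [Set.indicator_of_notMem hξ, hVdef]
          rw [Set.indicator_of_notMem hξ, zero_mul]
          simp
      have eV : (fun ξ => (‖V ξ‖₊ : ENNReal)^2) = s.indicator (fun _ => (1:ENNReal)) := by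
        funext ξ
        by_cases hξ : ξ ∈ s
        · rw [Set.indicator_of_mem hξ, hVdef, Set.indicator_of_mem hξ]; simp
        · rw [Set.indicator_of_notMem hξ, hVdef, Set.indicator_of_notMem hξ]; simp
      rw [eW, eV, lintegral_indicator hs, lintegral_indicator hs, setLIntegral_one] at h4
      exact h4
    -- conclude a.e.
    have hU' := hU.1
    have hU'm : Measurable (hU'.mk U) := hU'.measurable_mk
    have hfm : Measurable (fun ξ => (‖hU'.mk U ξ‖₊ : ENNReal)^2) :=
      (hU'm.nnnorm.coe_nnreal_ennreal).pow_const 2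
    have hae2 : (fun ξ => (‖hU'.mk U ξ‖₊ : ENNReal)^2) =ᵐ[volume.restrict Ω]
        (fun _ => (1:ENNReal)) := by
      apply ae_eq_of_forall_setLIntegral_eq_of_sigmaFinite hfm measurable_const
      intro s hs _
      rw [setLIntegral_one, Measure.restrict_restrict hs, Measure.restrict_apply hs]
      have hmeas2 : MeasurableSet (s ∩ Ω) := hs.inter hΩmeas
      have e5 : ∫⁻ ξ in s ∩ Ω, (‖hU'.mk U ξ‖₊ : ENNReal)^2
          = ∫⁻ ξ in s ∩ Ω, (‖U ξ‖₊ : ENNReal)^2 := by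
        refine lintegral_congr_ae ?_
        filter_upwards [ae_restrict_of_ae hU'.ae_eq_mk] with ξ hξ
        rw [hξ]
      rw [e5, claimC (s ∩ Ω) hmeas2 Set.inter_subset_right]
    have hae3 : ∀ᵐ ξ ∂(volume.restrict Ω), ‖U ξ‖ = 1 := by
      filter_upwards [hae2, ae_restrict_of_ae hU'.ae_eq_mk] with ξ h1 h2
      have h9 : (‖U ξ‖₊ : ENNReal)^2 = 1 := by rw [h2]; exact h1
      have h8 : ‖U ξ‖^2 = 1 := by
        have := congrArg ENNReal.toReal h9
        simpa using this
      nlinarith [norm_nonneg (U ξ), h8]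
    exact (ae_restrict_iff' hΩmeas).mp hae3
  · -- |U| = 1 a.e. on Ω → isometry
    intro hae V hV hVsupp
    have hWm : AEStronglyMeasurable (fun ξ => V ξ * (starRingEnd ℂ) (U ξ)) volume :=
      hV.1.mul (Complex.continuous_conj.comp_aestronglyMeasurable hU.1)
    have hnorm : ∀ᵐ ξ ∂volume, ‖V ξ * (starRingEnd ℂ) (U ξ)‖ = ‖V ξ‖ := by
      filter_upwards [hae] with ξ hξ
      by_cases hmem : ξ ∈ Ω
      · rw [norm_mul, RCLike.norm_conj, hξ hmem, mul_one]
      · rw [hVsupp ξ hmem]; simp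
    have hWmem : MemLp (fun ξ => V ξ * (starRingEnd ℂ) (U ξ)) 2 volume :=
      ⟨hWm, by rw [eLpNorm_congr_norm_ae hnorm]; exact hV.2⟩
    have hWsupp : ∀ ξ, ξ ∉ Set.Ioc (-R) (-R + 2*R) → V ξ * (starRingEnd ℂ) (U ξ) = 0 := by
      intro ξ hξ
      rw [hVsupp ξ (fun hmem => hξ (hΩsub hmem)), zero_mul]
    have h2 := plancherel_Ioc' (-R) (2*R) hTpos _ hWmem hWsupp
    exact h2.trans (eLpNorm_congr_norm_ae hnorm)
end

section
/- Let Y be a Banach space continuously embedded in L¹_loc(G) with a continuous representation r satisfying r(x)f(y) = f(yx) a.e., and let g ∈ L¹_loc(G) be such that ∫_G |g(x⁻¹)| ‖r(x)f‖_Y dx < ∞ for all f ∈ Y. Then for each f ∈ Y, f and g are convolvable, f ⋆ g ∈ Y, and ‖f ⋆ g‖_Y ≤ ∫_G |g(x⁻¹)| ‖r(x)f‖_Y dx. -/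
open MeasureTheory Filter Set
open scoped ENNReal NNReal
set_option maxHeartbeats 1000000

/-- Let `Y` be a Banach space continuously embedded (via `j`) in `L¹_loc(G)` on a locally
compact second countable group `G` with left Haar measure, carrying a continuous
representation `r` with `r(x)f(y) = f(yx)` a.e.  If `g ∈ L¹_loc(G)` satisfies
`∫ |g(x⁻¹)| ‖r(x)f‖_Y dx < ∞` for all `f ∈ Y`, then for each `f ∈ Y` the functions `f` and
`g` are convolvable, `f ⋆ g ∈ Y` and `‖f ⋆ g‖_Y ≤ ∫ |g(x⁻¹)| ‖r(x)f‖_Y dx`. -/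
theorem conv_mem_banach_of_integrable_norm
    {G : Type*} [Group G] [TopologicalSpace G] [IsTopologicalGroup G]
    [LocallyCompactSpace G] [SecondCountableTopology G]
    [MeasurableSpace G] [BorelSpace G]
    (μ : Measure G) [μ.IsHaarMeasure]
    {Y : Type*} [NormedAddCommGroup Y] [NormedSpace ℂ Y] [CompleteSpace Y]
    (j : Y →ₗ[ℂ] (G → ℂ))
    (hj_loc : ∀ f : Y, LocallyIntegrable (j f) μ)
    (hj_cont : ∀ 𝒦 : Set G, IsCompact 𝒦 → ∃ C : ℝ, 0 ≤ C ∧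
      ∀ f : Y, ∫ x in 𝒦, ‖j f x‖ ∂μ ≤ C * ‖f‖)
    (r : G → Y →L[ℂ] Y)
    (hr_cont : ∀ f : Y, Continuous fun x => r x f)
    (hr : ∀ (x : G) (f : Y), j (r x f) =ᵐ[μ] fun y => j f (y * x))
    (g : G → ℂ) (hg_loc : LocallyIntegrable g μ)
    (hg : ∀ f : Y, Integrable (fun x => ‖g x⁻¹‖ * ‖r x f‖) μ) :
    ∀ f : Y,
      (∀ᵐ x ∂μ, Integrable (fun y => j f y * g (y⁻¹ * x)) μ) ∧
      LocallyIntegrable (fun x => ∫ y, ‖j f y‖ * ‖g (y⁻¹ * x)‖ ∂μ) μ ∧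
      ∃ h : Y, (j h =ᵐ[μ] fun x => ∫ y, j f y * g (y⁻¹ * x) ∂μ) ∧
        ‖h‖ ≤ ∫ x, ‖g x⁻¹‖ * ‖r x f‖ ∂μ := by
  intro f
  have hjf_m : AEStronglyMeasurable (j f) μ := (hj_loc f).aestronglyMeasurable
  have hg_m : AEStronglyMeasurable g μ := hg_loc.aestronglyMeasurable
  have qinv : Measure.QuasiMeasurePreserving (fun x : G => x⁻¹) μ μ :=
    MeasureTheory.quasiMeasurePreserving_inv μ
  have qmul : Measure.QuasiMeasurePreserving (fun p : G × G => p.1 * p.2) (μ.prod μ) μ :=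
    Measure.quasiMeasurePreserving_snd.comp
      (measurePreserving_prod_mul μ μ).quasiMeasurePreserving
  have qconv : Measure.QuasiMeasurePreserving (fun p : G × G => p.2⁻¹ * p.1) (μ.prod μ) μ :=
    MeasureTheory.QuasiMeasurePreserving.prod_of_left
      (measurable_snd.inv.mul measurable_fst)
      (Eventually.of_forall fun y =>
        (measurePreserving_mul_left μ y⁻¹).quasiMeasurePreserving)
  -- joint measurability
  have hΦ : AEStronglyMeasurable (fun p : G × G => j f p.2 * g (p.2⁻¹ * p.1)) (μ.prod μ) :=
    (hjf_m.comp_quasiMeasurePreserving Measure.quasiMeasurePreserving_snd).mul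
      (hg_m.comp_quasiMeasurePreserving qconv)
  have hΨ : AEStronglyMeasurable (fun p : G × G => j f (p.1 * p.2) * g p.2⁻¹) (μ.prod μ) :=
    (hjf_m.comp_quasiMeasurePreserving qmul).mul
      (hg_m.comp_quasiMeasurePreserving (qinv.comp Measure.quasiMeasurePreserving_snd))
  have hac : ∀ T : Set G, ((μ.restrict T).prod μ) ≪ (μ.prod μ) := fun T =>
    Measure.AbsolutelyContinuous.prod
      (Measure.absolutelyContinuous_of_le Measure.restrict_le_self)
      (Measure.AbsolutelyContinuous.refl μ)
  have hΨm : ∀ T : Set G,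
      AEMeasurable (fun p : G × G => (‖j f (p.1 * p.2)‖₊ : ℝ≥0∞) * ‖g p.2⁻¹‖₊)
        ((μ.restrict T).prod μ) := by
    intro T
    refine AEMeasurable.fun_mul ?_ ?_
    · exact ((hjf_m.comp_quasiMeasurePreserving qmul).mono_ac (hac T)).enorm
    · exact ((hg_m.comp_quasiMeasurePreserving
        (qinv.comp Measure.quasiMeasurePreserving_snd)).mono_ac (hac T)).enorm
  set N : ℝ := ∫ x, ‖g x⁻¹‖ * ‖r x f‖ ∂μ with hN
  -- the core finiteness estimate
  have core : ∀ (T K : Set G), T ⊆ K → IsCompact K →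
      ∫⁻ p : G × G, (‖j f (p.1 * p.2)‖₊ : ℝ≥0∞) * ‖g p.2⁻¹‖₊ ∂((μ.restrict T).prod μ) < ⊤ := by
    intro T K hTK hK
    obtain ⟨C, hC0, hC⟩ := hj_cont K hK
    rw [lintegral_prod _ (hΨm T), lintegral_lintegral_swap (hΨm T)]
    have step1 : ∀ w : G,
        ∫⁻ y, (‖j f (y * w)‖₊ : ℝ≥0∞) * ‖g w⁻¹‖₊ ∂μ.restrict T
          ≤ (‖g w⁻¹‖₊ : ℝ≥0∞) * ENNReal.ofReal (C * ‖r w f‖) := by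
      intro w
      rw [lintegral_mul_const' (‖g w⁻¹‖₊ : ℝ≥0∞) _ ENNReal.coe_ne_top, mul_comm]
      refine mul_le_mul_right ?_ _
      calc ∫⁻ y in T, (‖j f (y * w)‖₊ : ℝ≥0∞) ∂μ
          ≤ ∫⁻ y in K, (‖j f (y * w)‖₊ : ℝ≥0∞) ∂μ :=
            lintegral_mono' (Measure.restrict_mono hTK le_rfl) le_rfl
        _ = ∫⁻ y in K, (‖j (r w f) y‖₊ : ℝ≥0∞) ∂μ := by
            refine lintegral_congr_ae ?_
            filter_upwards [ae_restrict_of_ae (hr w f)] with y hy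
            rw [hy]
        _ = ENNReal.ofReal (∫ y in K, ‖j (r w f) y‖ ∂μ) :=
            (ofReal_integral_norm_eq_lintegral_enorm
              ((hj_loc (r w f)).integrableOn_isCompact hK)).symm
        _ ≤ ENNReal.ofReal (C * ‖r w f‖) := ENNReal.ofReal_le_ofReal (hC (r w f))
    calc ∫⁻ w, ∫⁻ y, (‖j f (y * w)‖₊ : ℝ≥0∞) * ‖g w⁻¹‖₊ ∂μ.restrict T ∂μ
        ≤ ∫⁻ w, (‖g w⁻¹‖₊ : ℝ≥0∞) * ENNReal.ofReal (C * ‖r w f‖) ∂μ :=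
          lintegral_mono step1
      _ = ∫⁻ w, ENNReal.ofReal C * ENNReal.ofReal (‖g w⁻¹‖ * ‖r w f‖) ∂μ := by
          refine lintegral_congr fun w => ?_
          rw [ENNReal.ofReal_mul hC0, ENNReal.ofReal_mul (norm_nonneg _),
            ← enorm_eq_nnnorm, ← ofReal_norm (g w⁻¹)]
          ring
      _ = ENNReal.ofReal C * ENNReal.ofReal N := by
          rw [lintegral_const_mul' _ _ ENNReal.ofReal_ne_top, hN,
            ofReal_integral_eq_lintegral_ofReal (hg f)
              (Eventually.of_forall fun w => mul_nonneg (norm_nonneg _) (norm_nonneg _))]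
      _ < ⊤ := ENNReal.mul_lt_top ENNReal.ofReal_lt_top ENNReal.ofReal_lt_top
  -- the same estimate in convolution form
  have coreI : ∀ K : Set G, IsCompact K →
      ∫⁻ x in K, ∫⁻ y, (‖j f y‖₊ : ℝ≥0∞) * ‖g (y⁻¹ * x)‖₊ ∂μ ∂μ < ⊤ := by
    intro K hK
    have h1 : ∀ x : G, ∫⁻ y, (‖j f y‖₊ : ℝ≥0∞) * ‖g (y⁻¹ * x)‖₊ ∂μ
        = ∫⁻ w, (‖j f (x * w)‖₊ : ℝ≥0∞) * ‖g w⁻¹‖₊ ∂μ := by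
      intro x
      rw [← (measurePreserving_mul_left μ x).lintegral_comp_emb
        (MeasurableEquiv.mulLeft x).measurableEmbedding
        (fun y => (‖j f y‖₊ : ℝ≥0∞) * ‖g (y⁻¹ * x)‖₊)]
      refine lintegral_congr fun w => ?_
      simp [mul_inv_rev, mul_assoc]
    calc ∫⁻ x in K, ∫⁻ y, (‖j f y‖₊ : ℝ≥0∞) * ‖g (y⁻¹ * x)‖₊ ∂μ ∂μ
        = ∫⁻ x in K, ∫⁻ w, (‖j f (x * w)‖₊ : ℝ≥0∞) * ‖g w⁻¹‖₊ ∂μ ∂μ := by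
          exact lintegral_congr fun x => h1 x
      _ = ∫⁻ p : G × G, (‖j f (p.1 * p.2)‖₊ : ℝ≥0∞) * ‖g p.2⁻¹‖₊ ∂((μ.restrict K).prod μ) :=
          (lintegral_prod _ (hΨm K)).symm
      _ < ⊤ := core K K (subset_refl K) hK
  -- Claim 1 : a.e. convolvability
  have claim1 : ∀ᵐ x ∂μ, Integrable (fun y => j f y * g (y⁻¹ * x)) μ := by
    have hfin : ∀ᵐ x ∂μ, ∫⁻ y, (‖j f y‖₊ : ℝ≥0∞) * ‖g (y⁻¹ * x)‖₊ ∂μ < ⊤ := by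
      have hn : ∀ n : ℕ, ∀ᵐ x ∂μ.restrict (compactCovering G n),
          ∫⁻ y, (‖j f y‖₊ : ℝ≥0∞) * ‖g (y⁻¹ * x)‖₊ ∂μ < ⊤ := by
        intro n
        have hjoint : AEMeasurable
            (fun p : G × G => (‖j f p.2‖₊ : ℝ≥0∞) * ‖g (p.2⁻¹ * p.1)‖₊)
            ((μ.restrict (compactCovering G n)).prod μ) := by
          refine AEMeasurable.fun_mul ?_ ?_
          · exact ((hjf_m.comp_quasiMeasurePreserving
              Measure.quasiMeasurePreserving_snd).mono_ac (hac _)).enorm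
          · exact ((hg_m.comp_quasiMeasurePreserving qconv).mono_ac (hac _)).enorm
        have hint_m : AEMeasurable
            (fun x => ∫⁻ y, (‖j f y‖₊ : ℝ≥0∞) * ‖g (y⁻¹ * x)‖₊ ∂μ)
            (μ.restrict (compactCovering G n)) := by
          refine ⟨fun x => ∫⁻ y, hjoint.mk _ (x, y) ∂μ,
            hjoint.measurable_mk.lintegral_prod_right', ?_⟩
          filter_upwards [Measure.ae_ae_of_ae_prod hjoint.ae_eq_mk] with x hx
          exact lintegral_congr_ae hx
        exact ae_lt_top' hint_m (coreI _ (isCompact_compactCovering G n)).ne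
      have := (ae_restrict_iUnion_iff (fun n => compactCovering G n)
        (fun x => ∫⁻ y, (‖j f y‖₊ : ℝ≥0∞) * ‖g (y⁻¹ * x)‖₊ ∂μ < ⊤)).2 hn
      rwa [iUnion_compactCovering, Measure.restrict_univ] at this
    filter_upwards [hfin, hΦ.prodMk_left] with x h1 h2
    refine ⟨h2, ?_⟩
    rw [hasFiniteIntegral_def]
    calc ∫⁻ y, (‖j f y * g (y⁻¹ * x)‖₊ : ℝ≥0∞) ∂μ
        = ∫⁻ y, (‖j f y‖₊ : ℝ≥0∞) * ‖g (y⁻¹ * x)‖₊ ∂μ := by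
          refine lintegral_congr fun y => ?_
          rw [nnnorm_mul, ENNReal.coe_mul]
      _ < ⊤ := h1
  -- Claim 2 : local integrability of the convolution of the norms
  have claim2 : LocallyIntegrable (fun x => ∫ y, ‖j f y‖ * ‖g (y⁻¹ * x)‖ ∂μ) μ := by
    rw [locallyIntegrable_iff]
    intro K hK
    have haesm : AEStronglyMeasurable (fun x => ∫ y, ‖j f y‖ * ‖g (y⁻¹ * x)‖ ∂μ) μ := by
      have : AEStronglyMeasurable
          (fun p : G × G => ‖j f p.2‖ * ‖g (p.2⁻¹ * p.1)‖) (μ.prod μ) :=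
        (hjf_m.comp_quasiMeasurePreserving Measure.quasiMeasurePreserving_snd).norm.mul
          (hg_m.comp_quasiMeasurePreserving qconv).norm
      exact this.integral_prod_right'
    refine ⟨haesm.restrict, ?_⟩
    rw [hasFiniteIntegral_def]
    calc ∫⁻ x in K, (‖∫ y, ‖j f y‖ * ‖g (y⁻¹ * x)‖ ∂μ‖₊ : ℝ≥0∞) ∂μ
        ≤ ∫⁻ x in K, ∫⁻ y, (‖j f y‖₊ : ℝ≥0∞) * ‖g (y⁻¹ * x)‖₊ ∂μ ∂μ := by
          refine lintegral_mono fun x => ?_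
          refine (enorm_integral_le_lintegral_enorm _).trans_eq ?_
          refine lintegral_congr fun y => ?_
          rw [enorm_eq_nnnorm, nnnorm_mul, nnnorm_norm, nnnorm_norm, ENNReal.coe_mul]
      _ < ⊤ := coreI K hK
  -- Claim 3 : the vector-valued integral
  have int_vec : Integrable (fun x => g x⁻¹ • r x f) μ := by
    refine Integrable.mono' (hg f)
      ((hg_m.comp_quasiMeasurePreserving qinv).smul (hr_cont f).aestronglyMeasurable) ?_
    filter_upwards with x
    rw [norm_smul]
  set h : Y := ∫ x, g x⁻¹ • r x f ∂μ with hh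
  have hnorm : ‖h‖ ≤ N := by
    calc ‖h‖ ≤ ∫ x, ‖g x⁻¹ • r x f‖ ∂μ := norm_integral_le_integral_norm _
      _ = N := integral_congr_ae (Eventually.of_forall fun x => norm_smul _ _)
  -- conv is integrable on compacts
  have conv_int : ∀ K : Set G, IsCompact K →
      IntegrableOn (fun x => ∫ y, j f y * g (y⁻¹ * x) ∂μ) K μ := by
    intro K hK
    refine ⟨hΦ.integral_prod_right'.restrict, ?_⟩
    rw [hasFiniteIntegral_def]
    calc ∫⁻ x in K, (‖∫ y, j f y * g (y⁻¹ * x) ∂μ‖₊ : ℝ≥0∞) ∂μ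
        ≤ ∫⁻ x in K, ∫⁻ y, (‖j f y‖₊ : ℝ≥0∞) * ‖g (y⁻¹ * x)‖₊ ∂μ ∂μ := by
          refine lintegral_mono fun x => ?_
          refine (enorm_integral_le_lintegral_enorm _).trans_eq ?_
          refine lintegral_congr fun y => ?_
          rw [enorm_eq_nnnorm, nnnorm_mul, ENNReal.coe_mul]
      _ < ⊤ := coreI K hK
  -- the key set-integral identity
  have key : ∀ (T K : Set G), T ⊆ K → IsCompact K →
      ∫ x in T, j h x ∂μ = ∫ x in T, (∫ y, j f y * g (y⁻¹ * x) ∂μ) ∂μ := by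
    intro T K hTK hK
    obtain ⟨C, hC0, hC⟩ := hj_cont K hK
    have hint : ∀ u : Y, IntegrableOn (j u) T μ :=
      fun u => ((hj_loc u).integrableOn_isCompact hK).mono_set hTK
    set Λlin : Y →ₗ[ℂ] ℂ :=
      { toFun := fun u => ∫ x in T, j u x ∂μ
        map_add' := by
          intro u v
          have he : ∀ x, j (u + v) x = j u x + j v x := fun x => by rw [j.map_add]; rfl
          simp only [he]
          exact integral_add (hint u) (hint v)
        map_smul' := by
          intro c u
          have he : ∀ x, j (c • u) x = c * j u x := fun x => by rw [j.map_smul]; rfl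
          simp only [he, RingHom.id_apply]
          exact integral_const_mul c fun x => j u x } with hΛlin
    have hΛb : ∀ u : Y, ‖Λlin u‖ ≤ C * ‖u‖ := by
      intro u
      have : ‖∫ x in T, j u x ∂μ‖ ≤ C * ‖u‖ := by
        calc ‖∫ x in T, j u x ∂μ‖ ≤ ∫ x in T, ‖j u x‖ ∂μ := norm_integral_le_integral_norm _
          _ ≤ ∫ x in K, ‖j u x‖ ∂μ :=
              setIntegral_mono_set ((hj_loc u).integrableOn_isCompact hK).norm
                (Eventually.of_forall fun x => norm_nonneg _) hTK.eventuallyLE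
          _ ≤ C * ‖u‖ := hC u
      exact this
    set Λ : Y →L[ℂ] ℂ := LinearMap.mkContinuous Λlin C hΛb with hΛ
    have hΛ_apply : ∀ u : Y, Λ u = ∫ x in T, j u x ∂μ := fun u => rfl
    have lhs : ∫ x in T, j h x ∂μ = ∫ w, g w⁻¹ * (∫ x in T, j (r w f) x ∂μ) ∂μ := by
      calc ∫ x in T, j h x ∂μ = Λ h := (hΛ_apply h).symm
        _ = ∫ w, Λ (g w⁻¹ • r w f) ∂μ := (ContinuousLinearMap.integral_comp_comm Λ int_vec).symm
        _ = ∫ w, g w⁻¹ * (∫ x in T, j (r w f) x ∂μ) ∂μ := by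
            refine integral_congr_ae (Eventually.of_forall fun w => ?_)
            beta_reduce
            rw [Λ.map_smul, smul_eq_mul, hΛ_apply]
    have subst : ∀ x : G,
        (∫ y, j f y * g (y⁻¹ * x) ∂μ) = ∫ w, j f (x * w) * g w⁻¹ ∂μ := by
      intro x
      rw [← (measurePreserving_mul_left μ x).integral_comp
        (MeasurableEquiv.mulLeft x).measurableEmbedding
        (fun y => j f y * g (y⁻¹ * x))]
      refine integral_congr_ae (Eventually.of_forall fun w => ?_)
      simp [MeasurableEquiv.mulLeft, mul_inv_rev, mul_assoc]
    have hFub : Integrable (fun p : G × G => j f (p.1 * p.2) * g p.2⁻¹)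
        ((μ.restrict T).prod μ) := by
      refine ⟨hΨ.mono_ac (hac T), ?_⟩
      rw [hasFiniteIntegral_def]
      calc ∫⁻ p : G × G, (‖j f (p.1 * p.2) * g p.2⁻¹‖₊ : ℝ≥0∞) ∂((μ.restrict T).prod μ)
          = ∫⁻ p : G × G, (‖j f (p.1 * p.2)‖₊ : ℝ≥0∞) * ‖g p.2⁻¹‖₊ ∂((μ.restrict T).prod μ) := by
            refine lintegral_congr fun p => ?_
            rw [nnnorm_mul, ENNReal.coe_mul]
        _ < ⊤ := core T K hTK hK
    have rhs : ∫ x in T, (∫ y, j f y * g (y⁻¹ * x) ∂μ) ∂μ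
        = ∫ w, g w⁻¹ * (∫ x in T, j (r w f) x ∂μ) ∂μ := by
      calc ∫ x in T, (∫ y, j f y * g (y⁻¹ * x) ∂μ) ∂μ
          = ∫ x in T, ∫ w, j f (x * w) * g w⁻¹ ∂μ ∂μ :=
            integral_congr_ae (Eventually.of_forall fun x => subst x)
        _ = ∫ w, ∫ x in T, j f (x * w) * g w⁻¹ ∂μ ∂μ := integral_integral_swap hFub
        _ = ∫ w, g w⁻¹ * (∫ x in T, j (r w f) x ∂μ) ∂μ := by
            refine integral_congr_ae (Eventually.of_forall fun w => ?_)
            beta_reduce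
            rw [integral_mul_const]
            rw [show ∫ x in T, j f (x * w) ∂μ = ∫ x in T, j (r w f) x ∂μ from
              (integral_congr_ae (ae_restrict_of_ae (hr w f))).symm]
            rw [mul_comm]
    rw [lhs, rhs]
  -- Claim 4 : identification of `j h` with the convolution
  have claim4 : j h =ᵐ[μ] fun x => ∫ y, j f y * g (y⁻¹ * x) ∂μ := by
    have hn : ∀ n : ℕ, j h =ᵐ[μ.restrict (compactCovering G n)]
        fun x => ∫ y, j f y * g (y⁻¹ * x) ∂μ := by
      intro n
      set K := compactCovering G n with hKdef
      have hK : IsCompact K := isCompact_compactCovering G n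
      haveI : IsFiniteMeasure (μ.restrict K) :=
        ⟨by rw [Measure.restrict_apply_univ]; exact hK.measure_lt_top⟩
      refine ae_eq_of_forall_setIntegral_eq_of_sigmaFinite (μ := μ.restrict K)
        (f := j h) (g := fun x => ∫ y, j f y * g (y⁻¹ * x) ∂μ) ?_ ?_ ?_
      · intro s hs hμs
        exact ((hj_loc h).integrableOn_isCompact hK).integrableOn
      · intro s hs hμs
        exact (conv_int K hK).integrableOn
      · intro s hs hμs
        rw [Measure.restrict_restrict hs]
        beta_reduce
        exact key (s ∩ K) K inter_subset_right hK
    have := (ae_restrict_iUnion_iff (fun n => compactCovering G n)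
      (fun x => j h x = ∫ y, j f y * g (y⁻¹ * x) ∂μ)).2 hn
    rwa [iUnion_compactCovering, Measure.restrict_univ] at this
  exact ⟨claim1, claim2, h, claim4, hnorm⟩
end
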